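/- Assume condition C1 and let d ∈ (0, 1/2) with λ₀ ∈ [0, 1/2 − d]. There exists c ≥ 0 (depending only on d and the Lipschitz constant of F₀) such that for every θ = (λ, μ₁, μ₂) with λ ∈ [0, 1/2 − d] and every bounded H : ℝ → ℝ, the symmetrized inversion estimate F̂ = (1/2)(I + S_r)(A_θ⁻¹ H) satisfies sup_{x∈ℝ} |F̂(x) − F₀(x)| ≤ (1/(2d)) · sup_{x∈ℝ} |H(x) − G(x)| + c |θ − θ₀|₂. -/

import Mathlib

open MeasureTheory

/-- The inverse mixing operator `A_θ⁻¹`, defined by the geometric series. -/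
noncomputable def Ainv (lam mu₁ mu₂ : ℝ) (H : ℝ → ℝ) (x : ℝ) : ℝ :=
  (1 / (1 - lam)) * ∑' k : ℕ, (-lam / (1 - lam)) ^ k * H (x + mu₂ + (k : ℝ) * (mu₂ - mu₁))

/-- Euclidean norm on `ℝ³ = ℝ × ℝ × ℝ`. -/
noncomputable def enorm3 (θ : ℝ × ℝ × ℝ) : ℝ :=
  Real.sqrt (θ.1 ^ 2 + θ.2.1 ^ 2 + θ.2.2 ^ 2)

lemma abs_le_sqrt3 (a b c : ℝ) : |a| ≤ Real.sqrt (a ^ 2 + b ^ 2 + c ^ 2) := by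
  rw [← Real.sqrt_sq_eq_abs]
  exact Real.sqrt_le_sqrt (by nlinarith [sq_nonneg b, sq_nonneg c])

lemma ainv_summable {r : ℝ} (hr : |r| < 1) {H : ℝ → ℝ} {M : ℝ} (hH : ∀ x, |H x| ≤ M)
    (g : ℕ → ℝ) : Summable fun k => r ^ k * H (g k) := by
  apply Summable.of_norm_bounded (g := fun k => |r| ^ k * M)
    ((summable_geometric_of_lt_one (abs_nonneg r) hr).mul_right M)
  intro k
  rw [Real.norm_eq_abs, abs_mul, abs_pow]
  exact mul_le_mul_of_nonneg_left (hH _) (by positivity)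

lemma pow_sub_pow_abs_le {q a b : ℝ} (hq : 0 ≤ q) (ha : 0 ≤ a) (ha' : a ≤ q)
    (hb : 0 ≤ b) (hb' : b ≤ q) : ∀ k : ℕ, |a ^ k - b ^ k| ≤ (k : ℝ) * q ^ (k - 1) * |a - b| := by
  intro k
  induction k with
  | zero => simp
  | succ n ih =>
    have h1 : a ^ (n + 1) - b ^ (n + 1) = a * (a ^ n - b ^ n) + (a - b) * b ^ n := by ring
    have h2 : |a ^ (n + 1) - b ^ (n + 1)| ≤ |a| * |a ^ n - b ^ n| + |a - b| * |b ^ n| := by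
      rw [h1]
      exact (abs_add_le _ _).trans (by rw [abs_mul, abs_mul])
    have h3 : |a| * |a ^ n - b ^ n| ≤ q * ((n : ℝ) * q ^ (n - 1) * |a - b|) := by
      apply mul_le_mul (by rwa [abs_of_nonneg ha]) ih (abs_nonneg _) hq
    have h4 : |a - b| * |b ^ n| ≤ |a - b| * q ^ n := by
      apply mul_le_mul_of_nonneg_left _ (abs_nonneg _)
      rw [abs_pow, abs_of_nonneg hb]
      exact pow_le_pow_left₀ hb hb' n
    have h5 : q * ((n : ℝ) * q ^ (n - 1) * |a - b|) + |a - b| * q ^ n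
        ≤ ((n : ℝ) + 1) * q ^ n * |a - b| := by
      cases n with
      | zero => simp
      | succ m =>
        have e : (m + 1 : ℕ) - 1 = m := rfl
        rw [e]
        have : q * ((((m : ℝ) + 1)) * q ^ m * |a - b|) = ((m : ℝ) + 1) * q ^ (m + 1) * |a - b| := by
          rw [pow_succ]; ring
        push_cast
        rw [this]
        nlinarith [pow_nonneg hq (m + 1), abs_nonneg (a - b), pow_nonneg hq m]
    calc |a ^ (n + 1) - b ^ (n + 1)| ≤ |a| * |a ^ n - b ^ n| + |a - b| * |b ^ n| := h2
      _ ≤ q * ((n : ℝ) * q ^ (n - 1) * |a - b|) + |a - b| * q ^ n := add_le_add h3 h4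
      _ ≤ ((n : ℝ) + 1) * q ^ n * |a - b| := h5
      _ = ((n + 1 : ℕ) : ℝ) * q ^ ((n + 1) - 1) * |a - b| := by push_cast; ring_nf

lemma coeff_diff_bound {q s s₀ : ℝ} (hq0 : 0 < q) (hs0 : 0 ≤ s) (hsq : s ≤ q)
    (ht0 : 0 ≤ s₀) (htq : s₀ ≤ q) (k : ℕ) :
    |(s ^ k + s ^ (k + 1)) - (s₀ ^ k + s₀ ^ (k + 1))|
      ≤ ((k : ℝ) + 1) * q ^ k * ((1 / q + 1) * |s - s₀|) := by
  have h1 := pow_sub_pow_abs_le hq0.le hs0 hsq ht0 htq k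
  have h2 := pow_sub_pow_abs_le hq0.le hs0 hsq ht0 htq (k + 1)
  have h3 : |(s ^ k + s ^ (k + 1)) - (s₀ ^ k + s₀ ^ (k + 1))|
      ≤ |s ^ k - s₀ ^ k| + |s ^ (k + 1) - s₀ ^ (k + 1)| := by
    have e : (s ^ k + s ^ (k + 1)) - (s₀ ^ k + s₀ ^ (k + 1))
        = (s ^ k - s₀ ^ k) + (s ^ (k + 1) - s₀ ^ (k + 1)) := by ring
    rw [e]; exact abs_add_le _ _
  have h4 : (k : ℝ) * q ^ (k - 1) ≤ ((k : ℝ) + 1) * q ^ k / q := by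
    cases k with
    | zero => simp; positivity
    | succ m =>
      have e : (m + 1 : ℕ) - 1 = m := rfl
      rw [e, mul_div_assoc, pow_succ, mul_div_cancel_right₀ _ hq0.ne']
      push_cast
      nlinarith [pow_nonneg hq0.le m]
  have h5 : |s ^ k - s₀ ^ k| ≤ ((k : ℝ) + 1) * q ^ k / q * |s - s₀| :=
    h1.trans (mul_le_mul_of_nonneg_right h4 (abs_nonneg _))
  have h6 : |s ^ (k + 1) - s₀ ^ (k + 1)| ≤ ((k : ℝ) + 1) * q ^ k * |s - s₀| := by
    have e : (k + 1 : ℕ) - 1 = k := rfl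
    rw [e] at h2
    calc |s ^ (k + 1) - s₀ ^ (k + 1)| ≤ ((k + 1 : ℕ) : ℝ) * q ^ k * |s - s₀| := h2
      _ = ((k : ℝ) + 1) * q ^ k * |s - s₀| := by push_cast; ring
  have he : ((k : ℝ) + 1) * q ^ k / q * |s - s₀| + ((k : ℝ) + 1) * q ^ k * |s - s₀|
      = ((k : ℝ) + 1) * q ^ k * ((1 / q + 1) * |s - s₀|) := by ring
  linarith

lemma hasSum_succ_mul_geometric {q : ℝ} (hq0 : 0 ≤ q) (hq1 : q < 1) :
    HasSum (fun k : ℕ => ((k : ℝ) + 1) * q ^ k) (1 / (1 - q) ^ 2) := by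
  have h1 : HasSum (fun n : ℕ => (n : ℝ) * q ^ n) (q / (1 - q) ^ 2) :=
    hasSum_coe_mul_geometric_of_norm_lt_one (by rwa [Real.norm_eq_abs, abs_of_nonneg hq0])
  have h2 : HasSum (fun n : ℕ => q ^ n) (1 - q)⁻¹ := hasSum_geometric_of_lt_one hq0 hq1
  have h3 := h1.add h2
  have e1 : (fun n : ℕ => (n : ℝ) * q ^ n + q ^ n) = fun k : ℕ => ((k : ℝ) + 1) * q ^ k := by
    funext k; ring
  have e2 : q / (1 - q) ^ 2 + (1 - q)⁻¹ = 1 / (1 - q) ^ 2 := by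
    have : (1 : ℝ) - q ≠ 0 := by linarith
    field_simp
    ring
  rwa [e1, e2] at h3

set_option maxHeartbeats 1600000 in
/-- Error bound for the symmetrized inversion estimate
`F̂ = (1/2)(I + S_r)(A_θ⁻¹ H)` of the symmetric component `F₀`. -/
theorem stmt_15
    (ν : Measure ℝ) (hprob : IsProbabilityMeasure ν) (hsym : ν.map (fun x => -x) = ν)
    (F₀ : ℝ → ℝ) (hF₀ : ∀ x : ℝ, F₀ x = (ν (Set.Iic x)).toReal)
    -- condition C1
    (hmono : StrictMono F₀) (hlip : ∃ L : NNReal, LipschitzWith L F₀)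
    (d : ℝ) (hd : d ∈ Set.Ioo (0 : ℝ) (1 / 2))
    (lam₀ mu₁₀ mu₂₀ : ℝ) (hlam₀ : lam₀ ∈ Set.Icc (0 : ℝ) (1 / 2 - d)) (hmu₀ : mu₁₀ ≠ mu₂₀)
    (G : ℝ → ℝ) (hG : ∀ x : ℝ, G x = lam₀ * F₀ (x - mu₁₀) + (1 - lam₀) * F₀ (x - mu₂₀)) :
    ∃ c : ℝ, 0 ≤ c ∧
      ∀ lam mu₁ mu₂ : ℝ, lam ∈ Set.Icc (0 : ℝ) (1 / 2 - d) →
        ∀ H : ℝ → ℝ, (∃ M : ℝ, ∀ x : ℝ, |H x| ≤ M) →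
          ∀ δ : ℝ, (∀ x : ℝ, |H x - G x| ≤ δ) →
            ∀ x : ℝ,
              |(1 / 2) * (Ainv lam mu₁ mu₂ H x + 1 - Ainv lam mu₁ mu₂ H (-x)) - F₀ x|
                ≤ (1 / (2 * d)) * δ
                  + c * enorm3 ((lam, mu₁, mu₂) - (lam₀, mu₁₀, mu₂₀)) := by
  obtain ⟨Lnn, hLip⟩ := hlip
  set L : ℝ := (Lnn : ℝ) with hLdef
  have hL0 : 0 ≤ L := Lnn.coe_nonneg
  obtain ⟨hd0, hd2⟩ := hd
  set q : ℝ := (1 - 2 * d) / (1 + 2 * d) with hqdef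
  have hq0 : 0 < q := div_pos (by linarith) (by linarith)
  have hq1 : q < 1 := by rw [div_lt_one (by linarith)]; linarith
  -- basic facts about F₀
  have hF0 : ∀ x, 0 ≤ F₀ x := fun x => by rw [hF₀]; exact ENNReal.toReal_nonneg
  have hF1 : ∀ x, F₀ x ≤ 1 := by
    intro x
    rw [hF₀]
    have h1 : ν (Set.Iic x) ≤ 1 := prob_le_one
    calc (ν (Set.Iic x)).toReal ≤ (1 : ENNReal).toReal :=
          ENNReal.toReal_mono (by simp) h1
      _ = 1 := by simp
  have hFabs : ∀ x, |F₀ x| ≤ 1 := fun x => abs_le.2 ⟨by linarith [hF0 x], hF1 x⟩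
  have hFLip : ∀ x y : ℝ, |F₀ x - F₀ y| ≤ L * |x - y| := by
    intro x y
    have := hLip.dist_le_mul x y
    rwa [Real.dist_eq, Real.dist_eq] at this
  -- symmetry of F₀
  have hFsym : ∀ x : ℝ, F₀ x + F₀ (-x) = 1 := by
    intro x
    have hIci : ν (Set.Iic (-x)) = ν (Set.Ici x) := by
      conv_lhs => rw [← hsym]
      rw [Measure.map_apply measurable_neg measurableSet_Iic]
      congr 1
      ext y
      simp
    have hatom : (ν {x}).toReal = 0 := by
      have t0 : 0 ≤ (ν {x}).toReal := ENNReal.toReal_nonneg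
      have key : ∀ ε : ℝ, 0 < ε → (ν {x}).toReal ≤ L * ε := by
        intro ε hε
        have hsub : {x} ⊆ Set.Ioc (x - ε) x := by
          intro y hy
          simp only [Set.mem_singleton_iff] at hy
          subst hy
          exact ⟨by linarith, le_refl _⟩
        have h1 : (ν {x}).toReal ≤ (ν (Set.Ioc (x - ε) x)).toReal :=
          ENNReal.toReal_mono (measure_ne_top _ _) (measure_mono hsub)
        have h2 : (ν (Set.Ioc (x - ε) x)).toReal = F₀ x - F₀ (x - ε) := by
          rw [← Set.Iic_sdiff_Iic,
            measure_diff (Set.Iic_subset_Iic.2 (by linarith)) measurableSet_Iic.nullMeasurableSet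
              (measure_ne_top _ _),
            ENNReal.toReal_sub_of_le (measure_mono (Set.Iic_subset_Iic.2 (by linarith)))
              (measure_ne_top _ _), hF₀, hF₀]
        have h3 := hFLip x (x - ε)
        have h4 : |x - (x - ε)| = ε := by rw [show x - (x - ε) = ε by ring, abs_of_pos hε]
        rw [h4] at h3
        have h5 := (abs_le.1 h3).2
        linarith
      have key2 : ∀ ε : ℝ, 0 < ε → (ν {x}).toReal ≤ ε := by
        intro ε hε
        have hL1 : (0:ℝ) < L + 1 := by linarith
        have h9 := key (ε / (L + 1)) (by positivity)
        have h10 : L * (ε / (L + 1)) ≤ ε := by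
          rw [← mul_div_assoc, div_le_iff₀ hL1]
          nlinarith
        linarith
      by_contra h
      have ht : 0 < (ν {x}).toReal := lt_of_le_of_ne t0 (Ne.symm h)
      have := key2 ((ν {x}).toReal / 2) (by positivity)
      linarith
    have hatom' : ν {x} = 0 := by
      have := (ENNReal.toReal_eq_zero_iff _).1 hatom
      rcases this with h | h
      · exact h
      · exact absurd h (measure_ne_top _ _)
    have hsum : ν (Set.Iic x) + ν (Set.Ici x) = 1 := by
      have := measure_union_add_inter (μ := ν) (t := Set.Ici x) (Set.Iic x) measurableSet_Ici
      rw [Set.Iic_union_Ici, Set.Iic_inter_Ici, Set.Icc_self, hatom', add_zero,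
        measure_univ] at this
      exact this.symm
    rw [hF₀, hF₀, hIci, ← ENNReal.toReal_add (measure_ne_top _ _) (measure_ne_top _ _), hsum]
    simp
  -- facts about lam₀
  obtain ⟨hl00, hl01⟩ := hlam₀
  have h1l₀ : 0 < 1 - lam₀ := by linarith
  set s₀ : ℝ := lam₀ / (1 - lam₀) with hs₀def
  have hs₀0 : 0 ≤ s₀ := div_nonneg hl00 h1l₀.le
  have hs₀q : s₀ ≤ q := by
    rw [hs₀def, hqdef, div_le_div_iff₀ h1l₀ (by linarith)]
    nlinarith
  have hs₀1 : s₀ < 1 := lt_of_le_of_lt hs₀q hq1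
  have hr₀abs : |(-lam₀) / (1 - lam₀)| = s₀ := by
    rw [abs_div, abs_neg, abs_of_nonneg hl00, abs_of_pos h1l₀]
  -- G bounds and Lipschitz
  have hGb : ∀ y, |G y| ≤ 1 := by
    intro y
    rw [hG, abs_le]
    constructor
    · nlinarith [hF0 (y - mu₁₀), hF0 (y - mu₂₀)]
    · nlinarith [hF1 (y - mu₁₀), hF1 (y - mu₂₀), hF0 (y - mu₁₀), hF0 (y - mu₂₀)]
  have hGLip : ∀ y z : ℝ, |G y - G z| ≤ L * (|y - z|) := by
    intro y z
    have h1 := hFLip (y - mu₁₀) (z - mu₁₀)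
    have h2 := hFLip (y - mu₂₀) (z - mu₂₀)
    rw [show y - mu₁₀ - (z - mu₁₀) = y - z by ring] at h1
    rw [show y - mu₂₀ - (z - mu₂₀) = y - z by ring] at h2
    rw [hG, hG, abs_le]
    rw [abs_le] at h1 h2
    constructor <;> nlinarith [h1.1, h1.2, h2.1, h2.2]
  -- the constant
  refine ⟨1 / (1 - q) ^ 2 * ((4 / q + 4) + 4 * L), ?_, ?_⟩
  · apply mul_nonneg (by positivity)
    have : 0 ≤ 4 / q := div_nonneg (by norm_num) hq0.le
    linarith
  intro lam mu₁ mu₂ hlam H hHM δ hHδ x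
  obtain ⟨M, hM⟩ := hHM
  obtain ⟨hl0, hl1⟩ := hlam
  have hδ0 : 0 ≤ δ := le_trans (abs_nonneg _) (hHδ 0)
  have h1l : 0 < 1 - lam := by linarith
  set s : ℝ := lam / (1 - lam) with hsdef
  have hs0 : 0 ≤ s := div_nonneg hl0 h1l.le
  have hsq : s ≤ q := by
    rw [hsdef, hqdef, div_le_div_iff₀ h1l (by linarith)]
    nlinarith
  have hs1 : s < 1 := lt_of_le_of_lt hsq hq1
  have hrabs : |(-lam) / (1 - lam)| = s := by
    rw [abs_div, abs_neg, abs_of_nonneg hl0, abs_of_pos h1l]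
  set N : ℝ := enorm3 ((lam, mu₁, mu₂) - (lam₀, mu₁₀, mu₂₀)) with hNdef
  have hNeq : N = Real.sqrt ((lam - lam₀) ^ 2 + (mu₁ - mu₁₀) ^ 2 + (mu₂ - mu₂₀) ^ 2) := by
    rw [hNdef]; rfl
  have hNlam : |lam - lam₀| ≤ N := by rw [hNeq]; exact abs_le_sqrt3 _ _ _
  have hNmu₁ : |mu₁ - mu₁₀| ≤ N := by
    rw [hNeq, show (lam - lam₀) ^ 2 + (mu₁ - mu₁₀) ^ 2 + (mu₂ - mu₂₀) ^ 2
      = (mu₁ - mu₁₀) ^ 2 + (lam - lam₀) ^ 2 + (mu₂ - mu₂₀) ^ 2 by ring]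
    exact abs_le_sqrt3 _ _ _
  have hNmu₂ : |mu₂ - mu₂₀| ≤ N := by
    rw [hNeq, show (lam - lam₀) ^ 2 + (mu₁ - mu₁₀) ^ 2 + (mu₂ - mu₂₀) ^ 2
      = (mu₂ - mu₂₀) ^ 2 + (lam - lam₀) ^ 2 + (mu₁ - mu₁₀) ^ 2 by ring]
    exact abs_le_sqrt3 _ _ _
  -- Step I : Ainv at θ₀ applied to G recovers F₀
  have stepI : ∀ y : ℝ, Ainv lam₀ mu₁₀ mu₂₀ G y = F₀ y := by
    intro y
    set η : ℝ := mu₂₀ - mu₁₀ with hηdef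
    set r₀ : ℝ := -lam₀ / (1 - lam₀) with hr₀def
    have hr₀1 : |r₀| < 1 := by rw [hr₀def, hr₀abs]; exact hs₀1
    set f : ℕ → ℝ := fun k => r₀ ^ k * F₀ (y + (k : ℝ) * η) with hfdef
    have hfsum : Summable f := ainv_summable hr₀1 hFabs _
    have hfsum' : Summable fun k => f (k + 1) := (summable_nat_add_iff 1).2 hfsum
    rw [Ainv, ← tsum_mul_left]
    have hterm : ∀ k : ℕ,
        1 / (1 - lam₀) * ((-lam₀ / (1 - lam₀)) ^ k * G (y + mu₂₀ + (k : ℝ) * (mu₂₀ - mu₁₀)))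
          = f k - f (k + 1) := by
      intro k
      rw [hG]
      rw [show y + mu₂₀ + (k : ℝ) * (mu₂₀ - mu₁₀) - mu₁₀ = y + ((k : ℝ) + 1) * η by
        rw [hηdef]; ring]
      rw [show y + mu₂₀ + (k : ℝ) * (mu₂₀ - mu₁₀) - mu₂₀ = y + (k : ℝ) * η by
        rw [hηdef]; ring]
      rw [hfdef]
      simp only []
      push_cast
      rw [pow_succ, hr₀def]
      field_simp
      ring
    rw [tsum_congr hterm, Summable.tsum_sub hfsum hfsum', Summable.tsum_eq_zero_add hfsum]
    have : f 0 = F₀ y := by rw [hfdef]; simp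
    rw [← this]
    ring
  -- Step II : the H - G part
  have hsumH : ∀ y : ℝ, Summable fun k : ℕ =>
      (-lam / (1 - lam)) ^ k * H (y + mu₂ + (k : ℝ) * (mu₂ - mu₁)) :=
    fun y => ainv_summable (by rw [hrabs]; exact hs1) hM _
  have hsumG : ∀ y : ℝ, Summable fun k : ℕ =>
      (-lam / (1 - lam)) ^ k * G (y + mu₂ + (k : ℝ) * (mu₂ - mu₁)) :=
    fun y => ainv_summable (by rw [hrabs]; exact hs1) hGb _
  have stepII : ∀ y : ℝ,
      |Ainv lam mu₁ mu₂ H y - Ainv lam mu₁ mu₂ G y| ≤ 1 / (2 * d) * δ := by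
    intro y
    rw [Ainv, Ainv, ← mul_sub, ← Summable.tsum_sub (hsumH y) (hsumG y)]
    have he : ∀ k : ℕ,
        (-lam / (1 - lam)) ^ k * H (y + mu₂ + (k : ℝ) * (mu₂ - mu₁))
          - (-lam / (1 - lam)) ^ k * G (y + mu₂ + (k : ℝ) * (mu₂ - mu₁))
          = (-lam / (1 - lam)) ^ k
            * (H (y + mu₂ + (k : ℝ) * (mu₂ - mu₁)) - G (y + mu₂ + (k : ℝ) * (mu₂ - mu₁))) :=
      fun k => (mul_sub _ _ _).symm
    rw [tsum_congr he]
    have hbound : |∑' k : ℕ, (-lam / (1 - lam)) ^ k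
        * (H (y + mu₂ + (k : ℝ) * (mu₂ - mu₁)) - G (y + mu₂ + (k : ℝ) * (mu₂ - mu₁)))|
          ≤ (1 - s)⁻¹ * δ := by
      have hgs : HasSum (fun k : ℕ => s ^ k * δ) ((1 - s)⁻¹ * δ) :=
        (hasSum_geometric_of_lt_one hs0 hs1).mul_right δ
      rw [← Real.norm_eq_abs]
      refine tsum_of_norm_bounded hgs ?_
      intro k
      rw [Real.norm_eq_abs, abs_mul, abs_pow, hrabs]
      exact mul_le_mul_of_nonneg_left (hHδ _) (by positivity)
    rw [abs_mul, abs_of_pos (by positivity : (0:ℝ) < 1 / (1 - lam))]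
    calc 1 / (1 - lam) * |∑' k : ℕ, (-lam / (1 - lam)) ^ k
        * (H (y + mu₂ + (k : ℝ) * (mu₂ - mu₁)) - G (y + mu₂ + (k : ℝ) * (mu₂ - mu₁)))|
        ≤ 1 / (1 - lam) * ((1 - s)⁻¹ * δ) :=
          mul_le_mul_of_nonneg_left hbound (by positivity)
      _ ≤ 1 / (2 * d) * δ := by
          have he2 : (1 - lam) * (1 - s) = 1 - 2 * lam := by
            rw [hsdef]; field_simp; ring
          have hs1' : 0 < 1 - s := by linarith
          have h2lam : 2 * d ≤ 1 - 2 * lam := by linarith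
          rw [show 1 / (1 - lam) * ((1 - s)⁻¹ * δ) = δ / ((1 - lam) * (1 - s)) by
            field_simp]
          rw [he2, show 1 / (2 * d) * δ = δ / (2 * d) by ring]
          gcongr <;> linarith
  -- Step III : the θ - θ₀ part
  have stepIII : ∀ y : ℝ,
      |Ainv lam mu₁ mu₂ G y - Ainv lam₀ mu₁₀ mu₂₀ G y|
        ≤ 1 / (1 - q) ^ 2 * ((4 / q + 4) + 4 * L) * N := by
    intro y
    set E : ℝ := (4 / q + 4) * |lam - lam₀| + 2 * L * (|mu₁ - mu₁₀| + |mu₂ - mu₂₀|) with hEdef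
    have hsmall : |s - s₀| ≤ 4 * |lam - lam₀| := by
      have he : s - s₀ = (lam - lam₀) / ((1 - lam) * (1 - lam₀)) := by
        rw [hsdef, hs₀def]; field_simp; ring
      have hD : (1:ℝ)/4 ≤ (1 - lam) * (1 - lam₀) := by nlinarith
      rw [he, abs_div, abs_of_pos (by positivity : (0:ℝ) < (1 - lam) * (1 - lam₀))]
      rw [div_le_iff₀ (by positivity)]
      nlinarith [abs_nonneg (lam - lam₀)]
    have hcoef : ∀ k : ℕ, 1 / (1 - lam) * (-lam / (1 - lam)) ^ k
        = (-1 : ℝ) ^ k * (s ^ k + s ^ (k + 1)) := by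
      intro k
      rw [show -lam / (1 - lam) = -s by rw [hsdef]; ring]
      rw [neg_pow, pow_succ]
      rw [show (1 : ℝ) / (1 - lam) = 1 + s by rw [hsdef]; field_simp; ring]
      ring
    have hcoef₀ : ∀ k : ℕ, 1 / (1 - lam₀) * (-lam₀ / (1 - lam₀)) ^ k
        = (-1 : ℝ) ^ k * (s₀ ^ k + s₀ ^ (k + 1)) := by
      intro k
      rw [show -lam₀ / (1 - lam₀) = -s₀ by rw [hs₀def]; ring]
      rw [neg_pow, pow_succ]
      rw [show (1 : ℝ) / (1 - lam₀) = 1 + s₀ by rw [hs₀def]; field_simp; ring]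
      ring
    have hsumU : Summable fun k : ℕ => 1 / (1 - lam)
        * ((-lam / (1 - lam)) ^ k * G (y + mu₂ + (k : ℝ) * (mu₂ - mu₁))) :=
      (hsumG y).mul_left _
    have hsumV : Summable fun k : ℕ => 1 / (1 - lam₀)
        * ((-lam₀ / (1 - lam₀)) ^ k * G (y + mu₂₀ + (k : ℝ) * (mu₂₀ - mu₁₀))) :=
      Summable.mul_left _ (ainv_summable (by rw [hr₀abs]; exact hs₀1) hGb _)
    rw [Ainv, Ainv, ← tsum_mul_left, ← tsum_mul_left, ← Summable.tsum_sub hsumU hsumV]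
    have hgs : HasSum (fun k : ℕ => ((k : ℝ) + 1) * q ^ k * E) (1 / (1 - q) ^ 2 * E) :=
      (hasSum_succ_mul_geometric hq0.le hq1).mul_right E
    have hterm : ∀ k : ℕ,
        ‖1 / (1 - lam) * ((-lam / (1 - lam)) ^ k * G (y + mu₂ + (k : ℝ) * (mu₂ - mu₁)))
          - 1 / (1 - lam₀) * ((-lam₀ / (1 - lam₀)) ^ k * G (y + mu₂₀ + (k : ℝ) * (mu₂₀ - mu₁₀)))‖
          ≤ ((k : ℝ) + 1) * q ^ k * E := by
      intro k
      set yk : ℝ := y + mu₂ + (k : ℝ) * (mu₂ - mu₁) with hykdef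
      set zk : ℝ := y + mu₂₀ + (k : ℝ) * (mu₂₀ - mu₁₀) with hzkdef
      rw [Real.norm_eq_abs, ← mul_assoc, ← mul_assoc, hcoef, hcoef₀]
      have hsplit : (-1 : ℝ) ^ k * (s ^ k + s ^ (k + 1)) * G yk
          - (-1 : ℝ) ^ k * (s₀ ^ k + s₀ ^ (k + 1)) * G zk
          = (-1 : ℝ) ^ k * (((s ^ k + s ^ (k + 1)) - (s₀ ^ k + s₀ ^ (k + 1))) * G yk)
            + (-1 : ℝ) ^ k * ((s₀ ^ k + s₀ ^ (k + 1)) * (G yk - G zk)) := by ring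
      rw [hsplit]
      have habs1 : |(-1 : ℝ) ^ k * (((s ^ k + s ^ (k + 1)) - (s₀ ^ k + s₀ ^ (k + 1))) * G yk)|
          ≤ ((k : ℝ) + 1) * q ^ k * ((1 / q + 1) * (4 * |lam - lam₀|)) := by
        rw [abs_mul, abs_pow, abs_neg, abs_one, one_pow, one_mul, abs_mul]
        have h1 := coeff_diff_bound hq0 hs0 hsq hs₀0 hs₀q k
        have h2 : |(s ^ k + s ^ (k + 1)) - (s₀ ^ k + s₀ ^ (k + 1))| * |G yk|
            ≤ |(s ^ k + s ^ (k + 1)) - (s₀ ^ k + s₀ ^ (k + 1))| * 1 :=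
          mul_le_mul_of_nonneg_left (hGb yk) (abs_nonneg _)
        rw [mul_one] at h2
        refine h2.trans (h1.trans ?_)
        have : (1 / q + 1) * |s - s₀| ≤ (1 / q + 1) * (4 * |lam - lam₀|) := by
          apply mul_le_mul_of_nonneg_left hsmall
          positivity
        apply mul_le_mul_of_nonneg_left this
        positivity
      have habs2 : |(-1 : ℝ) ^ k * ((s₀ ^ k + s₀ ^ (k + 1)) * (G yk - G zk))|
          ≤ ((k : ℝ) + 1) * q ^ k * (2 * L * (|mu₁ - mu₁₀| + |mu₂ - mu₂₀|)) := by
        rw [abs_mul, abs_pow, abs_neg, abs_one, one_pow, one_mul, abs_mul]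
        have hc0 : |s₀ ^ k + s₀ ^ (k + 1)| ≤ 2 * q ^ k := by
          rw [abs_of_nonneg (by positivity)]
          have p1 : s₀ ^ k ≤ q ^ k := pow_le_pow_left₀ hs₀0 hs₀q k
          have p2 : s₀ ^ (k + 1) ≤ q ^ k := by
            calc s₀ ^ (k + 1) ≤ q ^ (k + 1) := pow_le_pow_left₀ hs₀0 hs₀q (k + 1)
              _ ≤ q ^ k := pow_le_pow_of_le_one hq0.le hq1.le (by omega)
          linarith
        have hdist : |yk - zk| ≤ ((k : ℝ) + 1) * (|mu₁ - mu₁₀| + |mu₂ - mu₂₀|) := by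
          rw [hykdef, hzkdef]
          rw [show y + mu₂ + (k : ℝ) * (mu₂ - mu₁) - (y + mu₂₀ + (k : ℝ) * (mu₂₀ - mu₁₀))
            = (mu₂ - mu₂₀) + (k : ℝ) * ((mu₂ - mu₂₀) - (mu₁ - mu₁₀)) by ring]
          calc |(mu₂ - mu₂₀) + (k : ℝ) * ((mu₂ - mu₂₀) - (mu₁ - mu₁₀))|
              ≤ |mu₂ - mu₂₀| + |(k : ℝ) * ((mu₂ - mu₂₀) - (mu₁ - mu₁₀))| := abs_add_le _ _
            _ ≤ |mu₂ - mu₂₀| + (k : ℝ) * (|mu₁ - mu₁₀| + |mu₂ - mu₂₀|) := by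
                rw [abs_mul, Nat.abs_cast]
                have : |(mu₂ - mu₂₀) - (mu₁ - mu₁₀)| ≤ |mu₁ - mu₁₀| + |mu₂ - mu₂₀| := by
                  calc |(mu₂ - mu₂₀) - (mu₁ - mu₁₀)| ≤ |mu₂ - mu₂₀| + |mu₁ - mu₁₀| :=
                        abs_sub _ _
                    _ = |mu₁ - mu₁₀| + |mu₂ - mu₂₀| := by ring
                have hk0 : (0 : ℝ) ≤ (k : ℝ) := Nat.cast_nonneg k
                nlinarith
            _ ≤ ((k : ℝ) + 1) * (|mu₁ - mu₁₀| + |mu₂ - mu₂₀|) := by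
                have hk0 : (0 : ℝ) ≤ (k : ℝ) := Nat.cast_nonneg k
                nlinarith [abs_nonneg (mu₁ - mu₁₀), abs_nonneg (mu₂ - mu₂₀)]
        have hdG : |G yk - G zk| ≤ L * (((k : ℝ) + 1) * (|mu₁ - mu₁₀| + |mu₂ - mu₂₀|)) :=
          (hGLip yk zk).trans (mul_le_mul_of_nonneg_left hdist hL0)
        calc |s₀ ^ k + s₀ ^ (k + 1)| * |G yk - G zk|
            ≤ (2 * q ^ k) * (L * (((k : ℝ) + 1) * (|mu₁ - mu₁₀| + |mu₂ - mu₂₀|))) := by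
              apply mul_le_mul hc0 hdG (abs_nonneg _) (by positivity)
          _ = ((k : ℝ) + 1) * q ^ k * (2 * L * (|mu₁ - mu₁₀| + |mu₂ - mu₂₀|)) := by ring
      calc |(-1 : ℝ) ^ k * (((s ^ k + s ^ (k + 1)) - (s₀ ^ k + s₀ ^ (k + 1))) * G yk)
            + (-1 : ℝ) ^ k * ((s₀ ^ k + s₀ ^ (k + 1)) * (G yk - G zk))|
          ≤ |(-1 : ℝ) ^ k * (((s ^ k + s ^ (k + 1)) - (s₀ ^ k + s₀ ^ (k + 1))) * G yk)|
            + |(-1 : ℝ) ^ k * ((s₀ ^ k + s₀ ^ (k + 1)) * (G yk - G zk))| := abs_add_le _ _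
        _ ≤ ((k : ℝ) + 1) * q ^ k * ((1 / q + 1) * (4 * |lam - lam₀|))
            + ((k : ℝ) + 1) * q ^ k * (2 * L * (|mu₁ - mu₁₀| + |mu₂ - mu₂₀|)) :=
            add_le_add habs1 habs2
        _ = ((k : ℝ) + 1) * q ^ k * E := by rw [hEdef]; ring
    have hmain : ‖∑' k : ℕ,
        (1 / (1 - lam) * ((-lam / (1 - lam)) ^ k * G (y + mu₂ + (k : ℝ) * (mu₂ - mu₁)))
          - 1 / (1 - lam₀) * ((-lam₀ / (1 - lam₀)) ^ k
            * G (y + mu₂₀ + (k : ℝ) * (mu₂₀ - mu₁₀))))‖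
        ≤ 1 / (1 - q) ^ 2 * E := tsum_of_norm_bounded hgs hterm
    rw [Real.norm_eq_abs] at hmain
    refine hmain.trans ?_
    have hE : E ≤ ((4 / q + 4) + 4 * L) * N := by
      rw [hEdef]
      have h1 : (4 / q + 4) * |lam - lam₀| ≤ (4 / q + 4) * N := by
        apply mul_le_mul_of_nonneg_left hNlam
        have : 0 ≤ 4 / q := by positivity
        linarith
      have h2 : 2 * L * (|mu₁ - mu₁₀| + |mu₂ - mu₂₀|) ≤ 2 * L * (2 * N) := by
        apply mul_le_mul_of_nonneg_left (by linarith) (by positivity)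
      nlinarith [hL0]
    calc 1 / (1 - q) ^ 2 * E ≤ 1 / (1 - q) ^ 2 * (((4 / q + 4) + 4 * L) * N) := by
          apply mul_le_mul_of_nonneg_left hE (by positivity)
      _ = 1 / (1 - q) ^ 2 * ((4 / q + 4) + 4 * L) * N := by ring
  -- combine
  have key : ∀ y : ℝ, |Ainv lam mu₁ mu₂ H y - F₀ y|
      ≤ 1 / (2 * d) * δ + 1 / (1 - q) ^ 2 * ((4 / q + 4) + 4 * L) * N := by
    intro y
    have h1 := stepII y
    have h2 := stepIII y
    rw [stepI y] at h2
    calc |Ainv lam mu₁ mu₂ H y - F₀ y|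
        = |(Ainv lam mu₁ mu₂ H y - Ainv lam mu₁ mu₂ G y) + (Ainv lam mu₁ mu₂ G y - F₀ y)| := by
          ring_nf
      _ ≤ |Ainv lam mu₁ mu₂ H y - Ainv lam mu₁ mu₂ G y| + |Ainv lam mu₁ mu₂ G y - F₀ y| :=
          abs_add_le _ _
      _ ≤ 1 / (2 * d) * δ + 1 / (1 - q) ^ 2 * ((4 / q + 4) + 4 * L) * N := add_le_add h1 h2
  have hx := key x
  have hnx := key (-x)
  have hsymx := hFsym x
  have e : (1 / 2) * (Ainv lam mu₁ mu₂ H x + 1 - Ainv lam mu₁ mu₂ H (-x)) - F₀ x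
      = (1 / 2) * ((Ainv lam mu₁ mu₂ H x - F₀ x) - (Ainv lam mu₁ mu₂ H (-x) - F₀ (-x))) := by
    linarith
  rw [e]
  have habs : |(1 : ℝ) / 2 * ((Ainv lam mu₁ mu₂ H x - F₀ x)
      - (Ainv lam mu₁ mu₂ H (-x) - F₀ (-x)))|
      ≤ 1 / 2 * (|Ainv lam mu₁ mu₂ H x - F₀ x| + |Ainv lam mu₁ mu₂ H (-x) - F₀ (-x)|) := by
    rw [abs_mul, abs_of_pos (by norm_num : (0:ℝ) < 1 / 2)]
    apply mul_le_mul_of_nonneg_left _ (by norm_num)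
    rw [sub_eq_add_neg]
    exact (abs_add_le _ _).trans (by rw [abs_neg])
  refine habs.trans ?_
  linarith
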